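/- Let (u_p, u_e) be a solution of the bulk system with F u_p(0)^{3/2} − E u_e(0)^{3/2} < 0 and B u_e(0)^{3/2} − A u_p(0)^{3/2} < 0, and suppose one of the two densities is strictly increasing at some point of its domain of positivity. Then the other density vanishes at some finite radius R₁ (it is positive on [0, R₁) and tends to 0 at R₁), and the increasing density remains bounded on [0, R₁]; in particular the increasing density neither develops a singularity on the other density's support nor do both densities stay positive on all of [0, ∞). -/

import Mathlib

open Set Filter
open scoped Topology

noncomputable section

/-- `(u_p, u_e)` is a solution of the bulk system wherever both densities are
positive: both functions are `C²` on `[0,∞)`, have vanishing derivative at `0`, and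
the equations hold at every `r > 0` such that both densities are positive on `[0,r]`. -/
def IsBulkSolWhilePos (A B E F : ℝ) (up ue : ℝ → ℝ) : Prop :=
  ContDiffOn ℝ 2 up (Ici 0) ∧ ContDiffOn ℝ 2 ue (Ici 0) ∧
  derivWithin up (Ici 0) 0 = 0 ∧ derivWithin ue (Ici 0) 0 = 0 ∧
  ∀ r : ℝ, 0 < r → (∀ s ∈ Icc 0 r, 0 < up s ∧ 0 < ue s) →
    derivWithin (derivWithin up (Ici 0)) (Ici 0) r + 2 / r * derivWithin up (Ici 0) r
      = F * up r ^ ((3:ℝ)/2) - E * ue r ^ ((3:ℝ)/2) ∧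
    derivWithin (derivWithin ue (Ici 0)) (Ici 0) r + 2 / r * derivWithin ue (Ici 0) r
      = B * ue r ^ ((3:ℝ)/2) - A * up r ^ ((3:ℝ)/2)

set_option maxHeartbeats 1000000 in
private lemma bulk_key (A B E F : ℝ) (hB : 0 < B) (hE : 0 < E) (hF : 0 < F)
    (hD : B * F < E * A)
    (up ue : ℝ → ℝ) (hup : ContDiffOn ℝ 2 up (Ici 0)) (hue : ContDiffOn ℝ 2 ue (Ici 0))
    (hode : ∀ r : ℝ, 0 < r → (∀ s ∈ Icc 0 r, 0 < up s ∧ 0 < ue s) →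
      derivWithin (derivWithin up (Ici 0)) (Ici 0) r + 2 / r * derivWithin up (Ici 0) r
        = F * up r ^ ((3:ℝ)/2) - E * ue r ^ ((3:ℝ)/2) ∧
      derivWithin (derivWithin ue (Ici 0)) (Ici 0) r + 2 / r * derivWithin ue (Ici 0) r
        = B * ue r ^ ((3:ℝ)/2) - A * up r ^ ((3:ℝ)/2))
    (hφ0 : F * up 0 ^ ((3:ℝ)/2) - E * ue 0 ^ ((3:ℝ)/2) < 0)
    (R₀ : ℝ) (hR₀ : 0 < R₀) (hpos : ∀ s ∈ Icc 0 R₀, 0 < up s ∧ 0 < ue s)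
    (hP0 : 0 < derivWithin up (Ici 0) R₀) :
    BddAbove {r : ℝ | ∀ s ∈ Icc 0 r, 0 < up s ∧ 0 < ue s} ∧
      ∀ r : ℝ, R₀ ≤ r → (∀ s ∈ Icc 0 r, 0 < up s ∧ 0 < ue s) → up R₀ ≤ up r := by
  set S : Set ℝ := {r : ℝ | ∀ s ∈ Icc 0 r, 0 < up s ∧ 0 < ue s} with hSdef
  have hSdc : ∀ {r t : ℝ}, t ∈ S → r ≤ t → r ∈ S := by
    intro r t ht hrt s hs; exact ht s ⟨hs.1, hs.2.trans hrt⟩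
  have hR₀S : R₀ ∈ S := hpos
  set u₁ := derivWithin up (Ici 0) with hu₁def
  set v₁ := derivWithin ue (Ici 0) with hv₁def
  set u₂ := derivWithin u₁ (Ici 0) with hu₂def
  set v₂ := derivWithin v₁ (Ici 0) with hv₂def
  have hupc : ContinuousOn up (Ici 0) := hup.continuousOn
  have huec : ContinuousOn ue (Ici 0) := hue.continuousOn
  have hu₁c : ContinuousOn u₁ (Ici 0) :=
    hup.continuousOn_derivWithin (uniqueDiffOn_Ici 0) (by norm_num)
  have hv₁c : ContinuousOn v₁ (Ici 0) :=
    hue.continuousOn_derivWithin (uniqueDiffOn_Ici 0) (by norm_num)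
  have hu₁cd : ContDiffOn ℝ 1 u₁ (Ici 0) :=
    hup.derivWithin (uniqueDiffOn_Ici 0) (by norm_num)
  have hv₁cd : ContDiffOn ℝ 1 v₁ (Ici 0) :=
    hue.derivWithin (uniqueDiffOn_Ici 0) (by norm_num)
  have hupd : ∀ {r : ℝ}, 0 < r → HasDerivAt up (u₁ r) r := by
    intro r hr
    have h1 : DifferentiableWithinAt ℝ up (Ici 0) r :=
      (hup.differentiableOn (by norm_num)) r (le_of_lt hr)
    have h2 : DifferentiableAt ℝ up r := h1.differentiableAt (Ici_mem_nhds hr)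
    have h3 : u₁ r = deriv up r := by
      rw [hu₁def]; exact derivWithin_of_mem_nhds (Ici_mem_nhds hr)
    rw [h3]; exact h2.hasDerivAt
  have hued : ∀ {r : ℝ}, 0 < r → HasDerivAt ue (v₁ r) r := by
    intro r hr
    have h1 : DifferentiableWithinAt ℝ ue (Ici 0) r :=
      (hue.differentiableOn (by norm_num)) r (le_of_lt hr)
    have h2 : DifferentiableAt ℝ ue r := h1.differentiableAt (Ici_mem_nhds hr)
    have h3 : v₁ r = deriv ue r := by
      rw [hv₁def]; exact derivWithin_of_mem_nhds (Ici_mem_nhds hr)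
    rw [h3]; exact h2.hasDerivAt
  have hu₁d : ∀ {r : ℝ}, 0 < r → HasDerivAt u₁ (u₂ r) r := by
    intro r hr
    have h1 : DifferentiableWithinAt ℝ u₁ (Ici 0) r :=
      (hu₁cd.differentiableOn (by norm_num)) r (le_of_lt hr)
    have h2 : DifferentiableAt ℝ u₁ r := h1.differentiableAt (Ici_mem_nhds hr)
    have h3 : u₂ r = deriv u₁ r := by
      rw [hu₂def]; exact derivWithin_of_mem_nhds (Ici_mem_nhds hr)
    rw [h3]; exact h2.hasDerivAt
  have hv₁d : ∀ {r : ℝ}, 0 < r → HasDerivAt v₁ (v₂ r) r := by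
    intro r hr
    have h1 : DifferentiableWithinAt ℝ v₁ (Ici 0) r :=
      (hv₁cd.differentiableOn (by norm_num)) r (le_of_lt hr)
    have h2 : DifferentiableAt ℝ v₁ r := h1.differentiableAt (Ici_mem_nhds hr)
    have h3 : v₂ r = deriv v₁ r := by
      rw [hv₂def]; exact derivWithin_of_mem_nhds (Ici_mem_nhds hr)
    rw [h3]; exact h2.hasDerivAt
  set φ : ℝ → ℝ := fun r => F * up r ^ ((3:ℝ)/2) - E * ue r ^ ((3:ℝ)/2) with hφdef
  set ψ : ℝ → ℝ := fun r => B * ue r ^ ((3:ℝ)/2) - A * up r ^ ((3:ℝ)/2) with hψdef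
  set P : ℝ → ℝ := fun r => r ^ 2 * u₁ r with hPdef
  set Q : ℝ → ℝ := fun r => r ^ 2 * v₁ r with hQdef
  have hPc : ContinuousOn P (Ici 0) := (continuous_pow 2).continuousOn.mul hu₁c
  have hQc : ContinuousOn Q (Ici 0) := (continuous_pow 2).continuousOn.mul hv₁c
  have hφc : ContinuousOn φ (Ici 0) := by
    apply ContinuousOn.sub
    · exact continuousOn_const.mul (hupc.rpow_const fun x _ => Or.inr (by norm_num))
    · exact continuousOn_const.mul (huec.rpow_const fun x _ => Or.inr (by norm_num))
  have hPd : ∀ {r : ℝ}, 0 < r → r ∈ S → HasDerivAt P (r ^ 2 * φ r) r := by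
    intro r hr hrS
    have h : HasDerivAt P ((2:ℝ) * r ^ (2-1) * u₁ r + r ^ 2 * u₂ r) r := by
      exact HasDerivAt.congr_deriv ((hasDerivAt_pow 2 r).mul (hu₁d hr)) (by simp)
    convert h using 1
    have he := (hode r hr hrS).1
    rw [hφdef]
    simp only []
    rw [← he]
    have hrne : r ≠ 0 := ne_of_gt hr
    field_simp
    ring
  have hQd : ∀ {r : ℝ}, 0 < r → r ∈ S → HasDerivAt Q (r ^ 2 * ψ r) r := by
    intro r hr hrS
    have h : HasDerivAt Q ((2:ℝ) * r ^ (2-1) * v₁ r + r ^ 2 * v₂ r) r := by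
      exact HasDerivAt.congr_deriv ((hasDerivAt_pow 2 r).mul (hv₁d hr)) (by simp)
    convert h using 1
    have he := (hode r hr hrS).2
    rw [hψdef]
    simp only []
    rw [← he]
    have hrne : r ≠ 0 := ne_of_gt hr
    field_simp
    ring
  have hφd : ∀ {r : ℝ}, 0 < r →
      HasDerivAt φ ((3/2) * (F * up r ^ ((1:ℝ)/2) * u₁ r - E * ue r ^ ((1:ℝ)/2) * v₁ r)) r := by
    intro r hr
    have h1 : HasDerivAt (fun x => up x ^ ((3:ℝ)/2))
        (u₁ r * ((3:ℝ)/2) * up r ^ ((3:ℝ)/2 - 1)) r :=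
      (hupd hr).rpow_const (Or.inr (by norm_num))
    have h2 : HasDerivAt (fun x => ue x ^ ((3:ℝ)/2))
        (v₁ r * ((3:ℝ)/2) * ue r ^ ((3:ℝ)/2 - 1)) r :=
      (hued hr).rpow_const (Or.inr (by norm_num))
    have h := (h1.const_mul F).sub (h2.const_mul E)
    refine HasDerivAt.congr_deriv h ?_
    rw [show ((3:ℝ)/2 - 1) = (1:ℝ)/2 by norm_num]
    ring
  -- κ
  set κ : ℝ := A - B * F / E with hκdef
  have hκ : 0 < κ := by
    rw [hκdef, sub_pos, div_lt_iff₀ hE]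
    linarith [hD]
  have hψle : ∀ {r : ℝ}, r ∈ S → 0 ≤ r → 0 ≤ φ r → ψ r ≤ -(κ * up r ^ ((3:ℝ)/2)) := by
    intro r hrS hr0 hφr
    have h1 : E * ue r ^ ((3:ℝ)/2) ≤ F * up r ^ ((3:ℝ)/2) := by
      have : φ r = F * up r ^ ((3:ℝ)/2) - E * ue r ^ ((3:ℝ)/2) := rfl
      linarith [hφr, this ▸ hφr]
    have h2 : B * ue r ^ ((3:ℝ)/2) ≤ B * F / E * up r ^ ((3:ℝ)/2) := by
      rw [div_mul_eq_mul_div, le_div_iff₀ hE]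
      calc B * ue r ^ ((3:ℝ)/2) * E = B * (E * ue r ^ ((3:ℝ)/2)) := by ring
        _ ≤ B * (F * up r ^ ((3:ℝ)/2)) := by
            exact mul_le_mul_of_nonneg_left h1 hB.le
        _ = B * F * up r ^ ((3:ℝ)/2) := by ring
    have h3 : ψ r = B * ue r ^ ((3:ℝ)/2) - A * up r ^ ((3:ℝ)/2) := rfl
    have h4 : -(κ * up r ^ ((3:ℝ)/2))
        = B * F / E * up r ^ ((3:ℝ)/2) - A * up r ^ ((3:ℝ)/2) := by
      rw [hκdef]; ring
    rw [h3, h4]; linarith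
  have hPR₀ : 0 < P R₀ := mul_pos (pow_pos hR₀ 2) hP0
  -- a point where φ is positive
  have hs₀ex : ∃ s₀ : ℝ, 0 < s₀ ∧ s₀ < R₀ ∧ 0 < φ s₀ := by
    by_contra h
    push_neg at h
    have hanti : AntitoneOn P (Icc 0 R₀) := by
      apply antitoneOn_of_deriv_nonpos (convex_Icc _ _) (hPc.mono Icc_subset_Ici_self)
      · rw [interior_Icc]
        intro x hx
        exact (hPd hx.1 (hSdc hR₀S hx.2.le)).differentiableAt.differentiableWithinAt
      · rw [interior_Icc]
        intro x hx
        rw [(hPd hx.1 (hSdc hR₀S hx.2.le)).deriv]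
        have hφx := h x hx.1 hx.2
        have : (0:ℝ) ≤ x ^ 2 := sq_nonneg x
        nlinarith
    have h0 : P R₀ ≤ P 0 := hanti (left_mem_Icc.mpr hR₀.le) (right_mem_Icc.mpr hR₀.le) hR₀.le
    have : P 0 = 0 := by rw [hPdef]; simp
    linarith
  obtain ⟨s₀, hs₀0, hs₀R₀, hφs₀⟩ := hs₀ex
  have hs₀S : s₀ ∈ S := hSdc hR₀S hs₀R₀.le
  -- once positive, φ stays positive
  have hφpos : ∀ t : ℝ, s₀ ≤ t → t ∈ S → 0 < φ t := by
    intro t hst htS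
    rcases eq_or_lt_of_le hst with h | hst
    · rw [← h]; exact hφs₀
    by_contra hc
    push_neg at hc
    set Z : Set ℝ := Icc s₀ t ∩ φ ⁻¹' (Iic 0) with hZdef
    have hZclosed : IsClosed Z := by
      refine (hφc.mono ?_).preimage_isClosed_of_isClosed isClosed_Icc isClosed_Iic
      intro x hx; exact le_trans hs₀0.le hx.1
    have hZne : Z.Nonempty := ⟨t, ⟨hst.le, le_refl t⟩, hc⟩
    have hZbdd : BddBelow Z := ⟨s₀, fun x hx => hx.1.1⟩
    set u := sInf Z with hudef
    have huZ : u ∈ Z := hZclosed.csInf_mem hZne hZbdd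
    have hus₀ : s₀ < u := by
      rcases eq_or_lt_of_le huZ.1.1 with h | h
      · exfalso; rw [← h] at huZ; exact absurd hφs₀ (not_lt.mpr huZ.2)
      · exact h
    have hut : u ≤ t := huZ.1.2
    have huS : u ∈ S := hSdc htS hut
    have hu0 : 0 < u := hs₀0.trans hus₀
    have hφu_le : φ u ≤ 0 := huZ.2
    have hφlt : ∀ r : ℝ, s₀ ≤ r → r < u → 0 < φ r := by
      intro r h1 h2
      by_contra h3
      push_neg at h3
      exact absurd (csInf_le hZbdd ⟨⟨h1, h2.le.trans hut⟩, h3⟩) (not_le.mpr h2)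
    set Z' : Set ℝ := Icc 0 s₀ ∩ φ ⁻¹' (Iic 0) with hZ'def
    have hZ'closed : IsClosed Z' := by
      refine (hφc.mono ?_).preimage_isClosed_of_isClosed isClosed_Icc isClosed_Iic
      intro x hx; exact hx.1
    have hZ'ne : Z'.Nonempty := ⟨0, ⟨le_refl 0, hs₀0.le⟩, hφ0.le⟩
    have hZ'bdd : BddAbove Z' := ⟨s₀, fun x hx => hx.1.2⟩
    set s₁ := sSup Z' with hs₁def
    have hs₁Z : s₁ ∈ Z' := hZ'closed.csSup_mem hZ'ne hZ'bdd
    have hs₁s₀ : s₁ < s₀ := by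
      rcases eq_or_lt_of_le hs₁Z.1.2 with h | h
      · exfalso; rw [h] at hs₁Z; exact absurd hφs₀ (not_lt.mpr hs₁Z.2)
      · exact h
    have hφs₁_le : φ s₁ ≤ 0 := hs₁Z.2
    have hφgt : ∀ r : ℝ, s₁ < r → r ≤ s₀ → 0 < φ r := by
      intro r h1 h2
      by_contra h3
      push_neg at h3
      have h0r : (0:ℝ) ≤ r := le_trans hs₁Z.1.1 h1.le
      exact absurd (le_csSup hZ'bdd ⟨⟨h0r, h2⟩, h3⟩) (not_le.mpr h1)
    have hs₁0 : 0 < s₁ := by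
      rcases eq_or_lt_of_le hs₁Z.1.1 with h | h
      · exfalso
        have hcont : Tendsto φ (𝓝[>] (0:ℝ)) (𝓝 (φ 0)) :=
          (hφc 0 Set.self_mem_Ici).tendsto.mono_left (nhdsWithin_mono _ Ioi_subset_Ici_self)
        have hev : ∀ᶠ r in 𝓝[>] (0:ℝ), 0 ≤ φ r := by
          filter_upwards [Ioc_mem_nhdsGT (h ▸ hs₁s₀ : (0:ℝ) < s₀)] with r hr
          exact (hφgt r (h ▸ hr.1) hr.2).le
        have : (0:ℝ) ≤ φ 0 := ge_of_tendsto hcont hev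
        have hφ0' : φ 0 < 0 := hφ0
        linarith
      · exact h
    have hs₁u : s₁ < u := lt_trans hs₁s₀ hus₀
    -- φ vanishes at s₁ and u
    have hφs₁ : φ s₁ = 0 := by
      refine le_antisymm hφs₁_le ?_
      have hcont : Tendsto φ (𝓝[>] s₁) (𝓝 (φ s₁)) :=
        ((hφc s₁ hs₁0.le).continuousAt (Ici_mem_nhds hs₁0)).tendsto.mono_left
          nhdsWithin_le_nhds
      refine ge_of_tendsto hcont ?_
      filter_upwards [Ioc_mem_nhdsGT hs₁s₀] with r hr
      exact (hφgt r hr.1 hr.2).le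
    have hφu : φ u = 0 := by
      refine le_antisymm hφu_le ?_
      have hcont : Tendsto φ (𝓝[<] u) (𝓝 (φ u)) :=
        ((hφc u hu0.le).continuousAt (Ici_mem_nhds hu0)).tendsto.mono_left
          nhdsWithin_le_nhds
      refine ge_of_tendsto hcont ?_
      filter_upwards [Ico_mem_nhdsLT hus₀] with r hr
      exact (hφlt r hr.1 hr.2).le
    -- φ nonneg on [s₁, u] and positive in the interior
    have hφmid : ∀ r : ℝ, s₁ < r → r < u → 0 < φ r := by
      intro r h1 h2
      rcases le_or_gt r s₀ with h | h
      · exact hφgt r h1 h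
      · exact hφlt r h.le h2
    have hφnn : ∀ r : ℝ, r ∈ Icc s₁ u → 0 ≤ φ r := by
      intro r hr
      rcases eq_or_lt_of_le hr.1 with h | h1
      · rw [← h, hφs₁]
      rcases eq_or_lt_of_le hr.2 with h | h2
      · rw [h, hφu]
      exact (hφmid r h1 h2).le
    -- the auxiliary monotone function
    set Rf : ℝ → ℝ := fun r => F ^ ((2:ℝ)/3) * P r - E ^ ((2:ℝ)/3) * Q r with hRfdef
    have hRfc : ContinuousOn Rf (Ici 0) :=
      (continuousOn_const.mul hPc).sub (continuousOn_const.mul hQc)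
    have hRfd : ∀ {x : ℝ}, 0 < x → x ∈ S →
        HasDerivAt Rf (F ^ ((2:ℝ)/3) * (x ^ 2 * φ x) - E ^ ((2:ℝ)/3) * (x ^ 2 * ψ x)) x := by
      intro x hx hxS
      exact ((hPd hx hxS).const_mul _).sub ((hQd hx hxS).const_mul _)
    have hRmono : StrictMonoOn Rf (Icc s₁ u) := by
      apply strictMonoOn_of_deriv_pos (convex_Icc _ _)
      · exact hRfc.mono (fun x hx => le_trans hs₁0.le hx.1)
      · rw [interior_Icc]
        intro x hx
        have hx0 : 0 < x := hs₁0.trans hx.1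
        have hxS : x ∈ S := hSdc huS hx.2.le
        rw [(hRfd hx0 hxS).deriv]
        have hφx : 0 ≤ φ x := hφnn x ⟨hx.1.le, hx.2.le⟩
        have hψx : ψ x ≤ -(κ * up x ^ ((3:ℝ)/2)) := hψle hxS hx0.le hφx
        have hupx : 0 < up x := (hxS x ⟨hx0.le, le_refl x⟩).1
        have h1 : 0 < up x ^ ((3:ℝ)/2) := Real.rpow_pos_of_pos hupx _
        have h2 : 0 < E ^ ((2:ℝ)/3) := Real.rpow_pos_of_pos hE _
        have h3 : 0 ≤ F ^ ((2:ℝ)/3) := (Real.rpow_pos_of_pos hF _).le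
        have hx2 : 0 < x ^ 2 := pow_pos hx0 2
        have t1 : 0 ≤ F ^ ((2:ℝ)/3) * (x ^ 2 * φ x) :=
          mul_nonneg h3 (mul_nonneg hx2.le hφx)
        have t2 : E ^ ((2:ℝ)/3) * (x ^ 2 * ψ x) < 0 := by
          have : x ^ 2 * ψ x ≤ x ^ 2 * (-(κ * up x ^ ((3:ℝ)/2))) :=
            mul_le_mul_of_nonneg_left hψx hx2.le
          have hneg : x ^ 2 * (-(κ * up x ^ ((3:ℝ)/2))) < 0 := by
            have := mul_pos hκ h1
            nlinarith
          have hlt : x ^ 2 * ψ x < 0 := lt_of_le_of_lt this hneg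
          exact mul_neg_of_pos_of_neg h2 hlt
        linarith
    -- sign of φ' at s₁ and u
    have hsign : ∀ z : ℝ, 0 < z → z ∈ S → φ z = 0 → ∀ d : ℝ,
        d = (3/2) * (F * up z ^ ((1:ℝ)/2) * u₁ z - E * ue z ^ ((1:ℝ)/2) * v₁ z) →
        ∃ c : ℝ, 0 < c ∧ Rf z = c * d := by
      intro z hz hzS hφz d hd
      have ha : 0 < up z := (hzS z ⟨hz.le, le_refl z⟩).1
      have hb : 0 < ue z := (hzS z ⟨hz.le, le_refl z⟩).2
      set w : ℝ := F * up z ^ ((3:ℝ)/2) with hwdef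
      have hw0 : 0 < w := mul_pos hF (Real.rpow_pos_of_pos ha _)
      have hwE : w = E * ue z ^ ((3:ℝ)/2) := by
        have : φ z = F * up z ^ ((3:ℝ)/2) - E * ue z ^ ((3:ℝ)/2) := rfl
        rw [this] at hφz
        rw [hwdef]; linarith
      have hFa : F * up z ^ ((1:ℝ)/2) = F ^ ((2:ℝ)/3) * w ^ ((1:ℝ)/3) := by
        rw [hwdef, Real.mul_rpow hF.le (Real.rpow_nonneg ha.le _)]
        rw [← Real.rpow_mul ha.le]
        rw [show ((3:ℝ)/2 * (1/3)) = (1:ℝ)/2 by norm_num]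
        rw [← mul_assoc, ← Real.rpow_add hF]
        norm_num
      have hEb : E * ue z ^ ((1:ℝ)/2) = E ^ ((2:ℝ)/3) * w ^ ((1:ℝ)/3) := by
        rw [hwE, Real.mul_rpow hE.le (Real.rpow_nonneg hb.le _)]
        rw [← Real.rpow_mul hb.le]
        rw [show ((3:ℝ)/2 * (1/3)) = (1:ℝ)/2 by norm_num]
        rw [← mul_assoc, ← Real.rpow_add hE]
        norm_num
      have hw13 : 0 < w ^ ((1:ℝ)/3) := Real.rpow_pos_of_pos hw0 _
      set T : ℝ := F ^ ((2:ℝ)/3) * u₁ z - E ^ ((2:ℝ)/3) * v₁ z with hTdef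
      have hdT : d = (3/2) * w ^ ((1:ℝ)/3) * T := by
        rw [hd, hTdef, hFa, hEb]; ring
      have hRT : Rf z = z ^ 2 * T := by
        rw [hRfdef, hTdef, hPdef, hQdef]; ring
      refine ⟨z ^ 2 / ((3/2) * w ^ ((1:ℝ)/3)), ?_, ?_⟩
      · positivity
      · rw [hRT, hdT]
        field_simp
    -- derivative of φ at s₁ is ≥ 0
    have hds₁ := hφd hs₁0
    have hd₁nn : 0 ≤ (3/2) * (F * up s₁ ^ ((1:ℝ)/2) * u₁ s₁ - E * ue s₁ ^ ((1:ℝ)/2) * v₁ s₁) := by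
      have hslope : Tendsto (slope φ s₁) (𝓝[>] s₁)
          (𝓝 ((3/2) * (F * up s₁ ^ ((1:ℝ)/2) * u₁ s₁ - E * ue s₁ ^ ((1:ℝ)/2) * v₁ s₁))) := by
        have := hasDerivAt_iff_tendsto_slope.mp hds₁
        exact this.mono_left (nhdsWithin_mono _ (fun y hy => ne_of_gt hy))
      refine ge_of_tendsto hslope ?_
      filter_upwards [Ioo_mem_nhdsGT hs₁u] with r hr
      rw [slope_def_field]
      apply div_nonneg
      · rw [hφs₁]; simp [(hφmid r hr.1 hr.2).le]
      · linarith [hr.1]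
    have hdu := hφd hu0
    have hdu_np : (3/2) * (F * up u ^ ((1:ℝ)/2) * u₁ u - E * ue u ^ ((1:ℝ)/2) * v₁ u) ≤ 0 := by
      have hslope : Tendsto (slope φ u) (𝓝[<] u)
          (𝓝 ((3/2) * (F * up u ^ ((1:ℝ)/2) * u₁ u - E * ue u ^ ((1:ℝ)/2) * v₁ u))) := by
        have := hasDerivAt_iff_tendsto_slope.mp hdu
        exact this.mono_left (nhdsWithin_mono _ (fun y hy => ne_of_lt hy))
      refine le_of_tendsto hslope ?_
      filter_upwards [Ioo_mem_nhdsLT hs₁u] with r hr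
      rw [slope_def_field]
      apply div_nonpos_of_nonneg_of_nonpos
      · rw [hφu]; simp [(hφmid r hr.1 hr.2).le]
      · linarith [hr.2]
    obtain ⟨c₁, hc₁pos, hc₁eq⟩ := hsign s₁ hs₁0 (hSdc huS hs₁u.le) hφs₁ _ rfl
    obtain ⟨c₂, hc₂pos, hc₂eq⟩ := hsign u hu0 huS hφu _ rfl
    have hR₁ : 0 ≤ Rf s₁ := by rw [hc₁eq]; exact mul_nonneg hc₁pos.le hd₁nn
    have hR₂ : Rf u ≤ 0 := by
      rw [hc₂eq]
      exact mul_nonpos_of_nonneg_of_nonpos hc₂pos.le hdu_np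
    have := hRmono (left_mem_Icc.mpr hs₁u.le) (right_mem_Icc.mpr hs₁u.le) hs₁u
    linarith
  -- monotonicity of up beyond R₀
  have key2 : ∀ r : ℝ, R₀ ≤ r → r ∈ S → up R₀ ≤ up r := by
    intro r hR₀r hrS
    rcases eq_or_lt_of_le hR₀r with h | hlt
    · rw [← h]
    have hPmono : MonotoneOn P (Icc s₀ r) := by
      apply monotoneOn_of_deriv_nonneg (convex_Icc _ _)
        (hPc.mono (fun x hx => le_trans hs₀0.le hx.1))
      · rw [interior_Icc]
        intro x hx
        exact (hPd (hs₀0.trans hx.1) (hSdc hrS hx.2.le)).differentiableAt.differentiableWithinAt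
      · rw [interior_Icc]
        intro x hx
        have hx0 : 0 < x := hs₀0.trans hx.1
        have hxS : x ∈ S := hSdc hrS hx.2.le
        rw [(hPd hx0 hxS).deriv]
        exact mul_nonneg (sq_nonneg x) (hφpos x hx.1.le hxS).le
    have hupmono : MonotoneOn up (Icc R₀ r) := by
      apply monotoneOn_of_deriv_nonneg (convex_Icc _ _)
        (hupc.mono (fun x hx => le_trans hR₀.le hx.1))
      · rw [interior_Icc]
        intro x hx
        exact (hupd (hR₀.trans hx.1)).differentiableAt.differentiableWithinAt
      · rw [interior_Icc]
        intro x hx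
        have hx0 : 0 < x := hR₀.trans hx.1
        rw [(hupd hx0).deriv]
        have hPx : P R₀ ≤ P x := by
          apply hPmono ⟨hs₀R₀.le, hR₀r⟩ ⟨hs₀R₀.le.trans hx.1.le, hx.2.le⟩ hx.1.le
        have hPxpos : 0 < P x := lt_of_lt_of_le hPR₀ hPx
        have hx2 : 0 < x ^ 2 := pow_pos hx0 2
        have hPx' : P x = x ^ 2 * u₁ x := rfl
        nlinarith
    exact hupmono (left_mem_Icc.mpr hR₀r) (right_mem_Icc.mpr hR₀r) hR₀r
  refine ⟨?_, key2⟩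
  -- boundedness
  have hupR₀ : 0 < up R₀ := (hpos R₀ ⟨hR₀.le, le_refl _⟩).1
  set c₁ : ℝ := κ * up R₀ ^ ((3:ℝ)/2) with hc₁def
  have hc₁0 : 0 < c₁ := mul_pos hκ (Real.rpow_pos_of_pos hupR₀ _)
  set q₀ : ℝ := Q R₀ + c₁ / 3 * R₀ ^ 3 with hq₀def
  set K : ℝ := max q₀ 0 / R₀ ^ 2 with hKdef
  have hK0 : 0 ≤ K := div_nonneg (le_max_right _ _) (pow_nonneg hR₀.le 2)
  have hKR : K * R₀ ^ 2 = max q₀ 0 := by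
    rw [hKdef, div_mul_cancel₀]
    exact ne_of_gt (pow_pos hR₀ 2)
  set rb : ℝ := max R₀ ((K + 1) * 3 / c₁) with hrbdef
  have hrbR₀ : R₀ ≤ rb := le_max_left _ _
  have hrb2 : (K + 1) * 3 / c₁ ≤ rb := le_max_right _ _
  clear_value c₁ q₀ K rb
  refine ⟨rb + max (ue rb) 0, ?_⟩
  intro t htS
  by_contra hcon
  push_neg at hcon
  have hrbt : rb < t := by
    have := le_max_right (ue rb) 0
    linarith
  have hrbS : rb ∈ S := hSdc htS hrbt.le
  have hψc₁ : ∀ x : ℝ, R₀ ≤ x → x ∈ S → ψ x ≤ -c₁ := by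
    intro x hx hxS
    have hx0 : 0 < x := lt_of_lt_of_le hR₀ hx
    have h1 : ψ x ≤ -(κ * up x ^ ((3:ℝ)/2)) :=
      hψle hxS hx0.le (hφpos x (hs₀R₀.le.trans hx) hxS).le
    have h2 : up R₀ ≤ up x := key2 x hx hxS
    have h3 : up R₀ ^ ((3:ℝ)/2) ≤ up x ^ ((3:ℝ)/2) :=
      Real.rpow_le_rpow hupR₀.le h2 (by norm_num)
    have h4 : κ * up R₀ ^ ((3:ℝ)/2) ≤ κ * up x ^ ((3:ℝ)/2) :=
      mul_le_mul_of_nonneg_left h3 hκ.le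
    rw [hc₁def]
    linarith
  have hGanti : AntitoneOn (fun x => Q x + c₁ / 3 * x ^ 3) (Icc R₀ t) := by
    apply antitoneOn_of_deriv_nonpos (convex_Icc _ _)
    · apply ContinuousOn.add (hQc.mono (fun x hx => le_trans hR₀.le hx.1))
      exact (continuous_const.mul (continuous_pow 3)).continuousOn
    · rw [interior_Icc]
      intro x hx
      have hx0 : 0 < x := hR₀.trans hx.1
      have hxS : x ∈ S := hSdc htS hx.2.le
      exact ((hQd hx0 hxS).add ((hasDerivAt_pow 3 x).const_mul
        (c₁ / 3))).differentiableAt.differentiableWithinAt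
    · rw [interior_Icc]
      intro x hx
      have hx0 : 0 < x := hR₀.trans hx.1
      have hxS : x ∈ S := hSdc htS hx.2.le
      have hder : HasDerivAt (fun x => Q x + c₁ / 3 * x ^ 3)
          (x ^ 2 * ψ x + c₁ / 3 * ((3:ℝ) * x ^ (3-1))) x :=
        (hQd hx0 hxS).add ((hasDerivAt_pow 3 x).const_mul (c₁ / 3))
      rw [hder.deriv]
      have hψx := hψc₁ x hx.1.le hxS
      have hx2 : (0:ℝ) ≤ x ^ 2 := sq_nonneg x
      have : x ^ 2 * ψ x ≤ x ^ 2 * (-c₁) := mul_le_mul_of_nonneg_left hψx hx2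
      have h9 : c₁ / 3 * ((3:ℝ) * x ^ (3 - 1)) = c₁ * x ^ 2 := by norm_num; ring
      rw [h9]
      linarith [this]
  have hv₁bound : ∀ x : ℝ, rb ≤ x → x ≤ t → v₁ x ≤ -1 := by
    intro x hx1 hx2
    have hxR₀ : R₀ ≤ x := le_trans hrbR₀ hx1
    have hx0 : 0 < x := lt_of_lt_of_le hR₀ hxR₀
    have hxS : x ∈ S := hSdc htS hx2
    have hQx : Q x + c₁ / 3 * x ^ 3 ≤ q₀ := by
      have := hGanti (left_mem_Icc.mpr (le_trans hxR₀ hx2))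
        ⟨hxR₀, hx2⟩ hxR₀
      rw [hq₀def]
      linarith [this]
    have hQx' : Q x = x ^ 2 * v₁ x := rfl
    have hx2pos : 0 < x ^ 2 := pow_pos hx0 2
    -- x^2 * v₁ x ≤ q₀ - c₁/3 * x^3 ≤ -x^2
    have hKx : (K + 1) * 3 ≤ x * c₁ := by
      have h1 : (K + 1) * 3 / c₁ ≤ x := le_trans hrb2 hx1
      rw [div_le_iff₀ hc₁0] at h1
      linarith
    have hR₀x : R₀ ^ 2 ≤ x ^ 2 := by nlinarith
    have hmax : q₀ ≤ K * x ^ 2 := by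
      calc q₀ ≤ max q₀ 0 := le_max_left _ _
        _ = K * R₀ ^ 2 := hKR.symm
        _ ≤ K * x ^ 2 := mul_le_mul_of_nonneg_left hR₀x hK0
    have hcube : (K + 1) * x ^ 2 ≤ c₁ / 3 * x ^ 3 := by
      have : c₁ / 3 * x ^ 3 = (x * c₁ / 3) * x ^ 2 := by ring
      rw [this]
      apply mul_le_mul_of_nonneg_right _ hx2pos.le
      linarith
    have hfin : x ^ 2 * v₁ x ≤ -(x ^ 2) := by
      rw [← hQx']
      linarith [hQx, hmax, hcube]
    nlinarith [hfin, hx2pos]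
  have hHanti : AntitoneOn (fun x => ue x + x) (Icc rb t) := by
    apply antitoneOn_of_deriv_nonpos (convex_Icc _ _)
    · apply ContinuousOn.add (huec.mono (fun x hx =>
        le_trans (le_trans hR₀.le hrbR₀) hx.1)) continuousOn_id
    · rw [interior_Icc]
      intro x hx
      have hx0 : 0 < x := lt_of_lt_of_le hR₀ (le_trans hrbR₀ hx.1.le)
      exact ((hued hx0).add (hasDerivAt_id' x)).differentiableAt.differentiableWithinAt
    · rw [interior_Icc]
      intro x hx
      have hx0 : 0 < x := lt_of_lt_of_le hR₀ (le_trans hrbR₀ hx.1.le)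
      rw [show deriv (fun x => ue x + x) x = v₁ x + 1 from ((hued hx0).add (hasDerivAt_id' x)).deriv]
      have := hv₁bound x hx.1.le hx.2.le
      linarith
  have hfin := hHanti (left_mem_Icc.mpr hrbt.le) (right_mem_Icc.mpr hrbt.le) hrbt.le
  have huet : 0 < ue t := (htS t ⟨(lt_of_lt_of_le hR₀ (le_trans hrbR₀ hrbt.le)).le, le_refl t⟩).2
  have : ue rb ≤ max (ue rb) 0 := le_max_left _ _
  simp only at hfin
  linarith

/-- Lemma 5.8: if one density is strictly increasing somewhere on the domain of
positivity, then the other density vanishes at some finite radius `R₁` (both are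
positive on `[0,R₁)` and the other tends to `0` at `R₁`), and the increasing density
remains bounded on `[0,R₁]`. -/
theorem stmt16 (A B E F : ℝ) (hA : 0 < A) (hB : 0 < B) (hE : 0 < E) (hF : 0 < F)
    (hEF : F < E) (hAB : B < A) (hBFEA : B * F < E * A)
    (up ue : ℝ → ℝ) (hsol : IsBulkSolWhilePos A B E F up ue)
    (hp0 : 0 < up 0) (he0 : 0 < ue 0)
    (hφ : F * up 0 ^ ((3:ℝ)/2) - E * ue 0 ^ ((3:ℝ)/2) < 0)
    (hψ : B * ue 0 ^ ((3:ℝ)/2) - A * up 0 ^ ((3:ℝ)/2) < 0)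
    (R₀ : ℝ) (hR₀ : 0 < R₀) (hpos : ∀ s ∈ Icc 0 R₀, 0 < up s ∧ 0 < ue s)
    (hinc : 0 < derivWithin up (Ici 0) R₀ ∨ 0 < derivWithin ue (Ici 0) R₀) :
    ∃ R₁ : ℝ, R₀ < R₁ ∧ (∀ r ∈ Ico 0 R₁, 0 < up r ∧ 0 < ue r) ∧
      (0 < derivWithin up (Ici 0) R₀ →
        Tendsto ue (nhdsWithin R₁ (Iio R₁)) (nhds 0) ∧
        ∃ M : ℝ, ∀ r ∈ Icc 0 R₁, up r ≤ M) ∧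
      (0 < derivWithin ue (Ici 0) R₀ →
        Tendsto up (nhdsWithin R₁ (Iio R₁)) (nhds 0) ∧
        ∃ M : ℝ, ∀ r ∈ Icc 0 R₁, ue r ≤ M) := by
  obtain ⟨hup, hue, hd0p, hd0e, hode⟩ := hsol
  set S : Set ℝ := {r : ℝ | ∀ s ∈ Icc 0 r, 0 < up s ∧ 0 < ue s} with hSdef
  have hR₀S : R₀ ∈ S := hpos
  have hSne : S.Nonempty := ⟨R₀, hR₀S⟩
  have hupc : ContinuousOn up (Ici 0) := hup.continuousOn
  have huec : ContinuousOn ue (Ici 0) := hue.continuousOn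
  have hode' : ∀ r : ℝ, 0 < r → (∀ s ∈ Icc 0 r, 0 < ue s ∧ 0 < up s) →
      derivWithin (derivWithin ue (Ici 0)) (Ici 0) r + 2 / r * derivWithin ue (Ici 0) r
        = B * ue r ^ ((3:ℝ)/2) - A * up r ^ ((3:ℝ)/2) ∧
      derivWithin (derivWithin up (Ici 0)) (Ici 0) r + 2 / r * derivWithin up (Ici 0) r
        = F * up r ^ ((3:ℝ)/2) - E * ue r ^ ((3:ℝ)/2) := by
    intro r hr h
    have h' : ∀ s ∈ Icc 0 r, 0 < up s ∧ 0 < ue s := fun s hs => ⟨(h s hs).2, (h s hs).1⟩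
    exact ⟨(hode r hr h').2, (hode r hr h').1⟩
  have hbdd : BddAbove S := by
    rcases hinc with h | h
    · exact (bulk_key A B E F hB hE hF hBFEA up ue hup hue hode hφ R₀ hR₀ hpos h).1
    · have := (bulk_key E F A B hF hA hB (by rw [mul_comm F B, mul_comm A E]; exact hBFEA)
        ue up hue hup hode' hψ R₀ hR₀ (fun s hs => ⟨(hpos s hs).2, (hpos s hs).1⟩) h).1
      obtain ⟨M, hM⟩ := this
      refine ⟨M, fun t ht => hM ?_⟩
      exact fun s hs => ⟨(ht s hs).2, (ht s hs).1⟩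
  set R₁ : ℝ := sSup S with hR₁def
  have hR₀R₁ : R₀ ≤ R₁ := le_csSup hbdd hR₀S
  have hR₁0 : 0 < R₁ := lt_of_lt_of_le hR₀ hR₀R₁
  have hposIco : ∀ r ∈ Ico 0 R₁, 0 < up r ∧ 0 < ue r := by
    intro r hr
    obtain ⟨t, htS, hrt⟩ := exists_lt_of_lt_csSup hSne hr.2
    exact htS r ⟨hr.1, hrt.le⟩
  have hSmem : ∀ r : ℝ, r < R₁ → r ∈ S := by
    intro r hr s hs
    exact hposIco s ⟨hs.1, lt_of_le_of_lt hs.2 hr⟩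
  have hext : ∀ t : ℝ, 0 ≤ t → t ∈ S → ∃ ε : ℝ, 0 < ε ∧ t + ε ∈ S := by
    intro t ht htS
    have h1 : ContinuousWithinAt up (Ici 0) t := hupc t ht
    have h2 : ContinuousWithinAt ue (Ici 0) t := huec t ht
    have hfp : 0 < up t := (htS t ⟨ht, le_refl t⟩).1
    have hgp : 0 < ue t := (htS t ⟨ht, le_refl t⟩).2
    have hev : ∀ᶠ s in 𝓝[Ici 0] t, 0 < up s ∧ 0 < ue s :=
      (h1.eventually (eventually_gt_nhds hfp)).and (h2.eventually (eventually_gt_nhds hgp))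
    rw [eventually_nhdsWithin_iff] at hev
    rcases Metric.eventually_nhds_iff.mp hev with ⟨δ, hδ, hball⟩
    refine ⟨δ / 2, by positivity, ?_⟩
    intro s hs
    rcases le_or_gt s t with h | h
    · exact htS s ⟨hs.1, h⟩
    · refine hball ?_ hs.1
      rw [Real.dist_eq, abs_of_pos (sub_pos.mpr h)]
      have := hs.2
      linarith
  have hR₀R₁' : R₀ < R₁ := by
    obtain ⟨ε, hε, hmem⟩ := hext R₀ hR₀.le hR₀S
    have := le_csSup hbdd hmem
    linarith
  have hdich : ¬(0 < up R₁ ∧ 0 < ue R₁) := by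
    rintro ⟨h1, h2⟩
    have hR₁S : R₁ ∈ S := by
      intro s hs
      rcases eq_or_lt_of_le hs.2 with h | h
      · rw [h]; exact ⟨h1, h2⟩
      · exact hposIco s ⟨hs.1, h⟩
    obtain ⟨ε, hε, hmem⟩ := hext R₁ hR₁0.le hR₁S
    have := le_csSup hbdd hmem
    linarith
  have hneIco : (𝓝[Ico R₀ R₁] R₁).NeBot := by
    rw [← mem_closure_iff_nhdsWithin_neBot, closure_Ico (ne_of_lt hR₀R₁')]
    exact ⟨hR₀R₁'.le, le_refl _⟩
  -- generic one-sided argument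
  have side : ∀ f g : ℝ → ℝ, ContinuousOn f (Ici 0) → ContinuousOn g (Ici 0) →
      (∀ r ∈ Ico 0 R₁, 0 < f r ∧ 0 < g r) → ¬(0 < f R₁ ∧ 0 < g R₁) →
      (∀ r : ℝ, R₀ ≤ r → r < R₁ → f R₀ ≤ f r) → 0 < f R₀ →
      Tendsto g (nhdsWithin R₁ (Iio R₁)) (nhds 0) ∧
        ∃ M : ℝ, ∀ r ∈ Icc 0 R₁, f r ≤ M := by
    intro f g hfc hgc hpos' hdich' hmono hfR₀
    have htendsto_f : Tendsto f (𝓝[Ico R₀ R₁] R₁) (𝓝 (f R₁)) :=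
      (hfc R₁ hR₁0.le).tendsto.mono_left
        (nhdsWithin_mono _ (fun x hx => le_trans hR₀.le hx.1))
    have hfR₁ : f R₀ ≤ f R₁ := by
      refine ge_of_tendsto htendsto_f ?_
      filter_upwards [self_mem_nhdsWithin] with r hr
      exact hmono r hr.1 hr.2
    have hfR₁pos : 0 < f R₁ := lt_of_lt_of_le hfR₀ hfR₁
    have htendsto_g : Tendsto g (𝓝[Ico R₀ R₁] R₁) (𝓝 (g R₁)) :=
      (hgc R₁ hR₁0.le).tendsto.mono_left
        (nhdsWithin_mono _ (fun x hx => le_trans hR₀.le hx.1))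
    have hgR₁nn : 0 ≤ g R₁ := by
      refine ge_of_tendsto htendsto_g ?_
      filter_upwards [self_mem_nhdsWithin] with r hr
      exact (hpos' r ⟨le_trans hR₀.le hr.1, hr.2⟩).2.le
    have hgR₁ : g R₁ = 0 := by
      rcases eq_or_lt_of_le hgR₁nn with h | h
      · exact h.symm
      · exact absurd ⟨hfR₁pos, h⟩ hdich'
    constructor
    · have h1 : Tendsto g (𝓝[Ico 0 R₁] R₁) (𝓝 (g R₁)) :=
        (hgc R₁ hR₁0.le).tendsto.mono_left (nhdsWithin_mono _ (fun x hx => hx.1))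
      rw [← nhdsWithin_Ico_eq_nhdsLT hR₁0]
      rwa [hgR₁] at h1
    · obtain ⟨x, hx, hmax⟩ := isCompact_Icc.exists_isMaxOn
        (nonempty_Icc.mpr hR₁0.le)
        (hfc.mono (fun y (hy : y ∈ Icc (0:ℝ) R₁) => hy.1))
      exact ⟨f x, fun r hr => hmax hr⟩
  refine ⟨R₁, hR₀R₁', hposIco, ?_, ?_⟩
  · intro h
    have hkey := bulk_key A B E F hB hE hF hBFEA up ue hup hue hode hφ R₀ hR₀ hpos h
    exact side up ue hupc huec hposIco hdich
      (fun r h1 h2 => hkey.2 r h1 (hSmem r h2)) (hpos R₀ ⟨hR₀.le, le_refl _⟩).1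
  · intro h
    have hkey := bulk_key E F A B hF hA hB (by rw [mul_comm F B, mul_comm A E]; exact hBFEA)
      ue up hue hup hode' hψ R₀ hR₀ (fun s hs => ⟨(hpos s hs).2, (hpos s hs).1⟩) h
    have hdich' : ¬(0 < ue R₁ ∧ 0 < up R₁) := fun ⟨a, b⟩ => hdich ⟨b, a⟩
    have hposIco' : ∀ r ∈ Ico 0 R₁, 0 < ue r ∧ 0 < up r :=
      fun r hr => ⟨(hposIco r hr).2, (hposIco r hr).1⟩
    exact side ue up huec hupc hposIco' hdich'
      (fun r h1 h2 => hkey.2 r h1 (fun s hs => ⟨(hSmem r h2 s hs).2, (hSmem r h2 s hs).1⟩))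
      (hpos R₀ ⟨hR₀.le, le_refl _⟩).2
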